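/- Let X be a nonempty set and let f, g : X → [0,∞) be two functions with f(x) ≤ g(x) for all x ∈ X. Let ψ ∈ Ψ and φ ∈ Φ satisfy φ(t) ≤ ψ(t) for all t ∈ [0,∞). Then there exists φ₁ ∈ Φ such that ψ(f(x)) − φ(f(x)) ≤ ψ(g(x)) − φ₁(g(x)) for all x ∈ X. -/

import Mathlib

open Filter Topology Set

/-- A G-metric on a set `X`, valued in `ℝ` (with values in `[0,∞)`). -/
structure IsGMetric {X : Type*} (G : X → X → X → ℝ) : Prop where
  nonneg : ∀ x y z, 0 ≤ G x y z
  /-- (G1) -/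
  eq_zero_of_eq : ∀ x, G x x x = 0
  /-- (G2) -/
  pos_of_ne : ∀ x y, x ≠ y → 0 < G x x y
  /-- (G3) -/
  le_of_ne : ∀ x y z, y ≠ z → G x x y ≤ G x y z
  /-- (G4): invariance under permutations (generated by these two transpositions) -/
  swap_left : ∀ x y z, G x y z = G y x z
  swap_right : ∀ x y z, G x y z = G x z y
  /-- (G5) rectangle inequality -/
  rect : ∀ x y z a, G x y z ≤ G x a a + G a y z

/-- A sequence `s` G-converges to `x` iff `G x (s n) (s n) → 0`. -/
def GConvergesTo {X : Type*} (G : X → X → X → ℝ) (s : ℕ → X) (x : X) : Prop :=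
  Tendsto (fun n => G x (s n) (s n)) atTop (𝓝 0)

/-- A sequence is G-Cauchy. -/
def GCauchy {X : Type*} (G : X → X → X → ℝ) (s : ℕ → X) : Prop :=
  ∀ ε > (0 : ℝ), ∃ N : ℕ, ∀ n ≥ N, ∀ m ≥ N, ∀ l ≥ N, G (s n) (s m) (s l) < ε

/-- `(X, G)` is G-complete. -/
def GComplete {X : Type*} (G : X → X → X → ℝ) : Prop :=
  ∀ s : ℕ → X, GCauchy G s → ∃ x, GConvergesTo G s x

/-- `T` is G-continuous. -/
def GContinuousMap {X : Type*} (G : X → X → X → ℝ) (T : X → X) : Prop :=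
  ∀ (s : ℕ → X) (x : X), GConvergesTo G s x → GConvergesTo G (fun n => T (s n)) (T x)

/-- `(X, ⪯, G)` is regular non-decreasing. -/
def RegularNondecreasing {X : Type*} [PartialOrder X] (G : X → X → X → ℝ) : Prop :=
  ∀ (s : ℕ → X) (x : X), Monotone s → GConvergesTo G s x → ∀ n, s n ≤ x

/-- Membership in the class `Ψ`: continuous, non-decreasing, nonnegative on `[0,∞)`
and vanishing exactly at `0`. -/
def MemPsi (ψ : ℝ → ℝ) : Prop :=
  ContinuousOn ψ (Ici 0) ∧ MonotoneOn ψ (Ici 0) ∧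
    (∀ t ≥ (0 : ℝ), 0 ≤ ψ t) ∧ (∀ t ≥ (0 : ℝ), (ψ t = 0 ↔ t = 0))

/-- Membership in the class `Φ`: lower semicontinuous, nonnegative on `[0,∞)`
and vanishing exactly at `0`. -/
def MemPhi (φ : ℝ → ℝ) : Prop :=
  LowerSemicontinuousOn φ (Ici 0) ∧
    (∀ t ≥ (0 : ℝ), 0 ≤ φ t) ∧ (∀ t ≥ (0 : ℝ), (φ t = 0 ↔ t = 0))

/-- The quantity `M(x,y,z)` associated with `G` and `T`. -/
noncomputable def Mfun {X : Type*} (G : X → X → X → ℝ) (T : X → X) (x y z : X) : ℝ :=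
  max (G x (T x) y) (max (G x (T x) z) (max (G x y z) (max (G y (T y) (T y))
    (max (G z (T z) (T z)) ((G x (T y) (T z) + G (T x) y z) / 2)))))

/-- The quantity `N(x,y)` associated with `G` and `T`. -/
noncomputable def Nfun {X : Type*} (G : X → X → X → ℝ) (T : X → X) (x y : X) : ℝ :=
  max (G x (T x) y) (max (G (T x) (T (T x)) (T (T x)))
    (max ((G x (T x) (T x) + G y (T y) (T y)) / 2)
      ((G x (T (T x)) (T y) + G (T x) (T x) y) / 2)))

theorem stmt3 {X : Type*} [Nonempty X] (f g : X → ℝ)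
    (hf_nonneg : ∀ x, 0 ≤ f x) (hg_nonneg : ∀ x, 0 ≤ g x)
    (hfg : ∀ x, f x ≤ g x)
    (ψ φ : ℝ → ℝ) (hψ : MemPsi ψ) (hφ : MemPhi φ)
    (hφψ : ∀ t ≥ (0 : ℝ), φ t ≤ ψ t) :
    ∃ φ₁ : ℝ → ℝ, MemPhi φ₁ ∧
      ∀ x, ψ (f x) - φ (f x) ≤ ψ (g x) - φ₁ (g x) := by
  obtain ⟨hψc, hψm, hψ0, hψiff⟩ := hψ
  obtain ⟨hφlsc, hφ0, hφiff⟩ := hφ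
  have ψ0 : ψ 0 = 0 := (hψiff 0 le_rfl).mpr rfl
  have φz : φ 0 = 0 := (hφiff 0 le_rfl).mpr rfl
  set d : ℝ → ℝ := fun s => φ s - ψ s with hd
  set A : ℝ → ℝ := fun t => sInf (d '' Icc 0 t) with hA
  have hne : ∀ t : ℝ, 0 ≤ t → (d '' Icc 0 t).Nonempty :=
    fun t ht => ⟨d 0, mem_image_of_mem _ ⟨le_rfl, ht⟩⟩
  have hlb : ∀ t : ℝ, 0 ≤ t → ∀ z ∈ d '' Icc 0 t, -ψ t ≤ z := by
    rintro t ht z ⟨s, hs, rfl⟩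
    have h1 : 0 ≤ φ s := hφ0 s hs.1
    have h2 : ψ s ≤ ψ t := hψm hs.1 (le_trans hs.1 hs.2) hs.2
    simp only [hd]; linarith
  have hbdd : ∀ t : ℝ, 0 ≤ t → BddBelow (d '' Icc 0 t) :=
    fun t ht => ⟨-ψ t, fun z hz => hlb t ht z hz⟩
  have hAle : ∀ t : ℝ, 0 ≤ t → ∀ s ∈ Icc (0:ℝ) t, A t ≤ d s :=
    fun t ht s hs => csInf_le (hbdd t ht) (mem_image_of_mem _ hs)
  have hAge : ∀ t : ℝ, 0 ≤ t → -ψ t ≤ A t :=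
    fun t ht => le_csInf (hne t ht) (hlb t ht)
  refine ⟨fun t => ψ t + A t, ⟨?_, ?_, ?_⟩, ?_⟩
  · -- lower semicontinuity on Ici 0
    intro t₀ ht₀ y hy
    have hy' : y < ψ t₀ + A t₀ := hy
    set ε : ℝ := (ψ t₀ + A t₀ - y) / 3 with hε
    have hεpos : 0 < ε := by simp only [hε]; linarith
    have ht₀' : (0:ℝ) ≤ t₀ := ht₀
    -- eventually, φ s > φ t₀ - ε/2 and |ψ s - ψ t₀| < ε/2
    have hev1 : ∀ᶠ s in 𝓝[Ici (0:ℝ)] t₀, φ t₀ - ε/2 < φ s :=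
      hφlsc t₀ ht₀ _ (by linarith)
    have hev2 : ∀ᶠ s in 𝓝[Ici (0:ℝ)] t₀, dist (ψ s) (ψ t₀) < ε/2 := by
      have := (hψc t₀ ht₀) (Metric.ball_mem_nhds (ψ t₀) (by linarith : (0:ℝ) < ε/2))
      exact this
    obtain ⟨δ, hδpos, hδ⟩ := Metric.mem_nhdsWithin_iff.mp (hev1.and hev2)
    rw [Filter.Eventually, Metric.mem_nhdsWithin_iff]
    refine ⟨δ, hδpos, ?_⟩
    rintro t ⟨htb, ht0⟩
    have ht0' : (0:ℝ) ≤ t := ht0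
    have htψ : ψ t₀ - ε/2 < ψ t := by
      have := (hδ ⟨htb, ht0⟩).2
      rw [Real.dist_eq, abs_lt] at this
      linarith [this.1]
    have hAt : A t₀ - ε ≤ A t := by
      refine le_csInf (hne t ht0') ?_
      rintro z ⟨s, hs, rfl⟩
      rcases le_or_gt s t₀ with hst | hst
      · have := hAle t₀ ht₀' s ⟨hs.1, hst⟩
        linarith
      · have hsball : s ∈ Metric.ball t₀ δ := by
          rw [Metric.mem_ball, Real.dist_eq, abs_lt]
          rw [Metric.mem_ball, Real.dist_eq, abs_lt] at htb
          constructor <;> [linarith; linarith [hs.2, htb.1, htb.2]]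
        have h1 := (hδ ⟨hsball, hs.1⟩).1
        have h2 := (hδ ⟨hsball, hs.1⟩).2
        rw [Real.dist_eq, abs_lt] at h2
        have hdt₀ : A t₀ ≤ d t₀ := hAle t₀ ht₀' t₀ ⟨ht₀', le_rfl⟩
        simp only [hd] at hdt₀ ⊢
        linarith [h2.2]
    show y < ψ t + A t
    simp only [hε] at hεpos htψ hAt
    linarith
  · -- nonneg
    intro t ht
    have := hAge t ht
    show 0 ≤ ψ t + A t
    linarith
  · -- zero iff
    intro t ht
    constructor
    · intro h0
      by_contra ht0
      have htpos : 0 < t := lt_of_le_of_ne ht (Ne.symm ht0)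
      have h0' : ψ t + A t = 0 := h0
      have hAeq : A t = -ψ t := by linarith
      -- minimizing sequence
      have hseq : ∀ n : ℕ, ∃ s ∈ Icc (0:ℝ) t, d s < A t + 1/(n+1) := by
        intro n
        have hlt : A t < A t + 1/(n+1) := by
          have : (0:ℝ) < 1/(n+1) := by positivity
          linarith
        obtain ⟨z, hz, hzlt⟩ := exists_lt_of_csInf_lt (hne t ht) hlt
        obtain ⟨s, hs, rfl⟩ := hz
        exact ⟨s, hs, hzlt⟩
      choose s hs hslt using hseq
      obtain ⟨a, ha, σ, hσ, hconv⟩ := (isCompact_Icc (a := (0:ℝ)) (b := t)).tendsto_subseq hs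
      have hupper : Tendsto (fun k => A t + 1/((σ k : ℝ)+1)) atTop (𝓝 (A t)) := by
        have h1 : Tendsto (fun k : ℕ => 1/((k:ℝ)+1)) atTop (𝓝 0) :=
          tendsto_one_div_add_atTop_nhds_zero_nat
        have h2 := h1.comp hσ.tendsto_atTop
        have := Tendsto.const_add (A t) h2
        simpa using this
      have hdlim : Tendsto (fun k => d (s (σ k))) atTop (𝓝 (A t)) :=
        tendsto_of_tendsto_of_tendsto_of_le_of_le tendsto_const_nhds hupper
          (fun k => hAle t ht _ (hs (σ k))) (fun k => (hslt (σ k)).le)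
      have hconv' : Tendsto (fun k => s (σ k)) atTop (𝓝[Ici (0:ℝ)] a) :=
        tendsto_nhdsWithin_of_tendsto_nhds_of_eventually_within _ hconv
          (Eventually.of_forall fun k => (hs (σ k)).1)
      have hψlim : Tendsto (fun k => ψ (s (σ k))) atTop (𝓝 (ψ a)) :=
        (hψc a ha.1).tendsto.comp hconv'
      have hφlim : Tendsto (fun k => φ (s (σ k))) atTop (𝓝 (A t + ψ a)) := by
        have := hdlim.add hψlim
        simp only [hd, sub_add_cancel] at this
        exact this
      have hφa : φ a ≤ A t + ψ a := by
        by_contra hgt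
        push_neg at hgt
        set y : ℝ := (A t + ψ a + φ a) / 2 with hy
        have hy2 : y < φ a := by simp only [hy]; linarith
        have hev := hφlsc a ha.1 y hy2
        have hevk : ∀ᶠ k in atTop, y ≤ φ (s (σ k)) :=
          (hconv'.eventually hev).mono fun k h => h.le
        have := ge_of_tendsto hφlim hevk
        simp only [hy] at this
        linarith
      have hψa : ψ a ≤ ψ t := hψm ha.1 ht ha.2
      have hφanonneg : 0 ≤ φ a := hφ0 a ha.1
      rw [hAeq] at hφa
      have hφa0 : φ a = 0 := by linarith
      have ha0 : a = 0 := (hφiff a ha.1).mp hφa0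
      have : ψ t = 0 := by
        rw [ha0, ψ0] at hφa
        linarith [hψ0 t ht]
      exact ht0 ((hψiff t ht).mp this)
    · intro h0
      subst h0
      have h1 : A 0 ≤ d 0 := hAle 0 le_rfl 0 ⟨le_rfl, le_rfl⟩
      have h2 := hAge 0 le_rfl
      have h1' : A 0 ≤ 0 := by simp only [hd] at h1; rw [ψ0, φz] at h1; linarith
      rw [ψ0] at h2
      show ψ 0 + A 0 = 0
      rw [ψ0]
      linarith
  · -- main inequality
    intro x
    have h1 : A (g x) ≤ d (f x) :=
      hAle (g x) (hg_nonneg x) (f x) ⟨hf_nonneg x, hfg x⟩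
    simp only [hd] at h1
    show ψ (f x) - φ (f x) ≤ ψ (g x) - (ψ (g x) + A (g x))
    linarith
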